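/- For all real k, m ≥ 1 and all x > 0, the function h(x) := ln Γ((k+m)x) − ln Γ(kx) − ln Γ(mx) − x[k ln((k+m)/k) + m ln((k+m)/m)] has nonnegative derivative; that is, (k+m)ψ((k+m)x) − kψ(kx) − mψ(mx) ≥ k ln((k+m)/k) + m ln((k+m)/m), where ψ is the digamma function. -/

import Mathlib

open Real Set Filter

namespace DLGCN

noncomputable def psi (y : ℝ) : ℝ := deriv (Real.log ∘ Real.Gamma) y

lemma diffL {y : ℝ} (hy : 0 < y) :
    DifferentiableAt ℝ (Real.log ∘ Real.Gamma) y := by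
  have hg : DifferentiableAt ℝ Real.Gamma y :=
    Real.differentiableAt_Gamma (fun n => by
      have : (0:ℝ) ≤ n := Nat.cast_nonneg n
      intro h; rw [h] at hy; linarith)
  have := hg.log (Real.Gamma_pos_of_pos hy).ne'
  exact this

lemma hasDerivL {y : ℝ} (hy : 0 < y) :
    HasDerivAt (Real.log ∘ Real.Gamma) (psi y) y := (diffL hy).hasDerivAt

lemma L_add_one {y : ℝ} (hy : 0 < y) :
    (Real.log ∘ Real.Gamma) (y + 1) = Real.log y + (Real.log ∘ Real.Gamma) y := by
  simp only [Function.comp_apply]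
  rw [Real.Gamma_add_one hy.ne', Real.log_mul hy.ne' (Real.Gamma_pos_of_pos hy).ne']

lemma psi_add_one {y : ℝ} (hy : 0 < y) : psi (y + 1) = psi y + 1 / y := by
  have h1 : HasDerivAt (fun t => (Real.log ∘ Real.Gamma) (t + 1)) (psi (y + 1)) y := by
    have := (hasDerivL (by linarith : (0:ℝ) < y + 1)).comp y
      ((hasDerivAt_id y).add_const 1)
    rw [mul_one] at this; exact this
  have h2 : HasDerivAt (fun t => Real.log t + (Real.log ∘ Real.Gamma) t)
      (y⁻¹ + psi y) y := (Real.hasDerivAt_log hy.ne').add (hasDerivL hy)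
  have heq : (fun t => (Real.log ∘ Real.Gamma) (t + 1))
      =ᶠ[nhds y] (fun t => Real.log t + (Real.log ∘ Real.Gamma) t) := by
    filter_upwards [eventually_gt_nhds hy] with t ht
    exact L_add_one ht
  have e1 := h1.deriv
  rw [heq.deriv_eq, h2.deriv] at e1
  rw [← e1]; ring

lemma psi_mono : MonotoneOn psi (Ioi (0:ℝ)) :=
  Real.convexOn_log_Gamma.monotoneOn_deriv (fun y hy => diffL hy)

/-- `g(t) = log t − log(t+1) + 1/t` is antitone: the step inequality. -/
lemma step_ineq {a b : ℝ} (ha : 0 < a) (hab : a ≤ b) :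
    Real.log b - Real.log (b + 1) + 1 / b ≤ Real.log a - Real.log (a + 1) + 1 / a := by
  have hb : 0 < b := lt_of_lt_of_le ha hab
  have key : AntitoneOn (fun t : ℝ => Real.log t - Real.log (t + 1) + 1 / t) (Ioi 0) := by
    have hder : ∀ t ∈ interior (Ioi (0:ℝ)),
        deriv (fun t : ℝ => Real.log t - Real.log (t + 1) + 1 / t) t ≤ 0 := by
      intro t ht
      rw [interior_Ioi] at ht
      have ht' : (0:ℝ) < t := ht
      have h1 : HasDerivAt (fun t : ℝ => Real.log t - Real.log (t + 1) + 1 / t)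
          (t⁻¹ - (t + 1)⁻¹ + (-(t ^ 2)⁻¹)) t := by
        have hl : HasDerivAt Real.log t⁻¹ t := Real.hasDerivAt_log ht'.ne'
        have hl2 : HasDerivAt (fun t : ℝ => Real.log (t + 1)) (t + 1)⁻¹ t := by
          have := (Real.hasDerivAt_log (by linarith : t + 1 ≠ 0)).comp t
            ((hasDerivAt_id t).add_const 1)
          rw [mul_one] at this; exact this
        have hinv : HasDerivAt (fun t : ℝ => 1 / t) (-(t ^ 2)⁻¹) t := by
          simpa [one_div] using hasDerivAt_inv ht'.ne'
        exact (hl.sub hl2).add hinv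
      rw [h1.deriv]
      have e : t⁻¹ - (t + 1)⁻¹ + (-(t ^ 2)⁻¹) = -(1 / (t ^ 2 * (t + 1))) := by
        field_simp
        ring
      rw [e]
      have : 0 < 1 / (t ^ 2 * (t + 1)) := by positivity
      linarith
    exact antitoneOn_of_deriv_nonpos (convex_Ioi 0)
      (by
        apply ContinuousOn.add (ContinuousOn.sub ?_ ?_) ?_
        · exact Real.continuousOn_log.mono (fun t ht => ne_of_gt ht)
        · exact ContinuousOn.log ((continuous_add_right 1).continuousOn)
            (fun t ht => by have : (0:ℝ) < t := ht; positivity)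
        · exact continuousOn_const.div continuousOn_id (fun t ht => ne_of_gt ht))
      (by
        intro t ht
        rw [interior_Ioi] at ht
        have ht' : (0:ℝ) < t := ht
        apply DifferentiableAt.differentiableWithinAt
        have d1 : DifferentiableAt ℝ (fun t : ℝ => Real.log (t + 1)) t :=
          (differentiableAt_id.add_const 1).log (by positivity)
        have d2 : DifferentiableAt ℝ (fun t : ℝ => 1 / t) t :=
          (differentiableAt_const 1).div differentiableAt_id ht'.ne'
        exact ((Real.differentiableAt_log ht'.ne').sub d1).add d2)
      hder
  exact key (mem_Ioi.mpr ha) (mem_Ioi.mpr hb) hab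

end DLGCN

namespace DLGCN

lemma aux (n : ℕ) : ∀ u v : ℝ, 0 < u → u ≤ v →
    Real.log v - Real.log u - (Real.log (v + n) - Real.log (u + n)) ≤ psi v - psi u := by
  induction n with
  | zero =>
    intro u v hu huv
    have hv : 0 < v := lt_of_lt_of_le hu huv
    have := psi_mono (mem_Ioi.mpr hu) (mem_Ioi.mpr hv) huv
    push_cast
    simp only [add_zero]
    linarith
  | succ n ih =>
    intro u v hu huv
    have hv : 0 < v := lt_of_lt_of_le hu huv
    have h1 := ih (u + 1) (v + 1) (by linarith) (by linarith)
    have h2 := step_ineq hu huv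
    have r1 := psi_add_one hu
    have r2 := psi_add_one hv
    push_cast
    rw [show v + ((n : ℝ) + 1) = (v + 1) + n by ring,
        show u + ((n : ℝ) + 1) = (u + 1) + n by ring]
    linarith

lemma key {u v : ℝ} (hu : 0 < u) (huv : u ≤ v) :
    Real.log v - Real.log u ≤ psi v - psi u := by
  have hv : 0 < v := lt_of_lt_of_le hu huv
  have t1 : Tendsto (fun n : ℕ => (v - u) / (u + n)) atTop (nhds 0) := by
    have h1 : Tendsto (fun n : ℕ => u + (n : ℝ)) atTop atTop :=
      tendsto_atTop_add_const_left _ u tendsto_natCast_atTop_atTop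
    simpa [div_eq_mul_inv] using h1.inv_tendsto_atTop.const_mul (v - u)
  have t0 : Tendsto (fun n : ℕ => Real.log (v + n) - Real.log (u + n)) atTop (nhds 0) := by
    apply squeeze_zero (g := fun n : ℕ => (v - u) / (u + (n : ℝ)))
    · intro n
      have : (0:ℝ) < u + n := by positivity
      have h2 : u + (n:ℝ) ≤ v + n := by linarith
      linarith [Real.log_le_log this h2]
    · intro n
      have hun : (0:ℝ) < u + n := by positivity
      have hvn : (0:ℝ) < v + n := by positivity
      have e1 : Real.log (v + n) - Real.log (u + n) = Real.log ((v + n) / (u + n)) :=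
        (Real.log_div hvn.ne' hun.ne').symm
      have e2 : (v + n) / (u + n) - 1 = (v - u) / (u + n) := by field_simp; ring
      rw [e1, ← e2]
      exact Real.log_le_sub_one_of_pos (by positivity : (0:ℝ) < (v + n) / (u + n))
    · exact t1
  have tt : Tendsto (fun n : ℕ =>
      Real.log v - Real.log u - (Real.log (v + n) - Real.log (u + n))) atTop
      (nhds (Real.log v - Real.log u)) := by
    simpa using tendsto_const_nhds.sub t0
  exact le_of_tendsto tt (Eventually.of_forall (fun n => aux n u v hu huv))

end DLGCN

open DLGCN in
/-- For real `k, m ≥ 1` and `x > 0`, the function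
`h(x) = ln Γ((k+m)x) − ln Γ(kx) − ln Γ(mx) − x[k ln((k+m)/k) + m ln((k+m)/m)]`
has nonnegative derivative. -/
theorem deriv_log_gamma_combination_nonneg (k m : ℝ) (hk : 1 ≤ k) (hm : 1 ≤ m)
    (x : ℝ) (hx : 0 < x) :
    0 ≤ deriv (fun y : ℝ =>
      Real.log (Real.Gamma ((k + m) * y)) - Real.log (Real.Gamma (k * y)) -
        Real.log (Real.Gamma (m * y)) -
        y * (k * Real.log ((k + m) / k) + m * Real.log ((k + m) / m))) x := by
  have hk0 : (0:ℝ) < k := lt_of_lt_of_le zero_lt_one hk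
  have hm0 : (0:ℝ) < m := lt_of_lt_of_le zero_lt_one hm
  have hkm : (0:ℝ) < k + m := by linarith
  have ha : 0 < (k + m) * x := by positivity
  have hb : 0 < k * x := by positivity
  have hc : 0 < m * x := by positivity
  set C := k * Real.log ((k + m) / k) + m * Real.log ((k + m) / m) with hC
  have hda : HasDerivAt (fun y : ℝ => Real.log (Real.Gamma ((k + m) * y)))
      (psi ((k + m) * x) * (k + m)) x := by
    have := (hasDerivL ha).comp x ((hasDerivAt_id x).const_mul (k + m))
    rw [mul_one] at this; exact this
  have hdb : HasDerivAt (fun y : ℝ => Real.log (Real.Gamma (k * y)))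
      (psi (k * x) * k) x := by
    have := (hasDerivL hb).comp x ((hasDerivAt_id x).const_mul k)
    rw [mul_one] at this; exact this
  have hdc : HasDerivAt (fun y : ℝ => Real.log (Real.Gamma (m * y)))
      (psi (m * x) * m) x := by
    have := (hasDerivL hc).comp x ((hasDerivAt_id x).const_mul m)
    rw [mul_one] at this; exact this
  have hdl : HasDerivAt (fun y : ℝ => y * C) C x := by
    simpa using (hasDerivAt_id x).mul_const C
  have total := ((hda.sub hdb).sub hdc).sub hdl
  rw [(show HasDerivAt (fun y : ℝ => Real.log (Real.Gamma ((k + m) * y)) - Real.log (Real.Gamma (k * y)) - Real.log (Real.Gamma (m * y)) - y * C) _ x from total).deriv]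
  have e1 : Real.log ((k + m) / k) = Real.log ((k + m) * x) - Real.log (k * x) := by
    rw [Real.log_div hkm.ne' hk0.ne', Real.log_mul hkm.ne' hx.ne',
      Real.log_mul hk0.ne' hx.ne']
    ring
  have e2 : Real.log ((k + m) / m) = Real.log ((k + m) * x) - Real.log (m * x) := by
    rw [Real.log_div hkm.ne' hm0.ne', Real.log_mul hkm.ne' hx.ne',
      Real.log_mul hm0.ne' hx.ne']
    ring
  have hP : Real.log ((k + m) * x) - Real.log (k * x) ≤ psi ((k + m) * x) - psi (k * x) :=
    key hb (by nlinarith)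
  have hQ : Real.log ((k + m) * x) - Real.log (m * x) ≤ psi ((k + m) * x) - psi (m * x) :=
    key hc (by nlinarith)
  have hkP := mul_le_mul_of_nonneg_left hP hk0.le
  have hmQ := mul_le_mul_of_nonneg_left hQ hm0.le
  rw [hC, e1, e2]
  nlinarith [hkP, hmQ]
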